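/- arXiv:0911.2529 — 2 statements merged into one kernel-verified Lean document; each statement's English description precedes it below -/
import Mathlib

section
/- Let F be a field of characteristic not 2 and let φ be a quadratic form of dimension m over F. Suppose that over K = F(X₁,…,Xₘ) there exists a K-linear map T : K^m → K^m with φ(T(Y)) = φ(X₁,…,Xₘ)·φ(Y) for all Y ∈ K^m. Then φ is strictly multiplicative: for every field extension E/F and all u, v ∈ E^m there exists w ∈ E^m with φ(u)·φ(v) = φ(w). -/
open Matrix

/-- The value of the quadratic form with (symmetric) Gram matrix `M` at `v`, with
coefficients transported along the ring homomorphism `f`. -/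
def formVal {F E : Type*} [CommRing F] [CommRing E] (f : F →+* E) {m : ℕ}
    (M : Matrix (Fin m) (Fin m) F) (v : Fin m → E) : E :=
  v ⬝ᵥ (M.map f).mulVec v

namespace StrictMultAux
open Polynomial

variable {m : ℕ} {S : Type*} [CommRing S]

/-- value of the quadratic form with Gram matrix `A` -/
def qV (A : Matrix (Fin m) (Fin m) S) (v : Fin m → S) : S := v ⬝ᵥ A.mulVec v

lemma formVal_eq {F E : Type*} [CommRing F] [CommRing E] (f : F →+* E) {m : ℕ}
    (M : Matrix (Fin m) (Fin m) F) (v : Fin m → E) : formVal f M v = qV (M.map f) v := rfl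

lemma qV_map {S' : Type*} [CommRing S'] (g : S →+* S') (A : Matrix (Fin m) (Fin m) S)
    (v : Fin m → S) : g (qV A v) = qV (A.map g) (fun i => g (v i)) := by
  simp [qV, dotProduct, Matrix.mulVec, map_sum, _root_.map_mul, Matrix.map]

lemma qV_smul (A : Matrix (Fin m) (Fin m) S) (c : S) (v : Fin m → S) :
    qV A (c • v) = c ^ 2 * qV A v := by
  simp [qV, Matrix.mulVec_smul, smul_dotProduct, dotProduct_smul, smul_eq_mul]
  ring

lemma qV_mulc (A : Matrix (Fin m) (Fin m) S) (c : S) (v : Fin m → S) :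
    qV A (fun i => c * v i) = c ^ 2 * qV A v := by
  have h : (fun i => c * v i) = c • v := rfl
  rw [h, qV_smul]

lemma qV_smulMat (A : Matrix (Fin m) (Fin m) S) (c : S) (v : Fin m → S) :
    qV (c • A) v = c * qV A v := by
  simp [qV, Matrix.smul_mulVec, dotProduct_smul, smul_eq_mul]

lemma qV_mulVec (A B : Matrix (Fin m) (Fin m) S) (v : Fin m → S) :
    qV A (B *ᵥ v) = qV (Bᵀ * A * B) v := by
  calc (B *ᵥ v) ⬝ᵥ A *ᵥ (B *ᵥ v) = ((B *ᵥ v) ᵥ* A) ⬝ᵥ (B *ᵥ v) := by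
        rw [Matrix.dotProduct_mulVec]
    _ = (v ᵥ* (Bᵀ * A)) ⬝ᵥ (B *ᵥ v) := by
        rw [← Matrix.vecMul_transpose, Matrix.vecMul_vecMul]
    _ = (v ᵥ* (Bᵀ * A * B)) ⬝ᵥ v := by rw [Matrix.dotProduct_mulVec, Matrix.vecMul_vecMul]
    _ = v ⬝ᵥ (Bᵀ * A * B) *ᵥ v := by rw [Matrix.dotProduct_mulVec]

lemma qV_add (A : Matrix (Fin m) (Fin m) S) (x y : Fin m → S) :
    qV A (x + y) = qV A x + qV A y + x ⬝ᵥ A *ᵥ y + y ⬝ᵥ A *ᵥ x := by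
  simp [qV, Matrix.mulVec_add, dotProduct_add, add_dotProduct]
  ring

lemma dot_symm {A : Matrix (Fin m) (Fin m) S} (h : A.IsSymm) (x y : Fin m → S) :
    x ⬝ᵥ A *ᵥ y = y ⬝ᵥ A *ᵥ x := by
  rw [Matrix.dotProduct_mulVec, ← Matrix.mulVec_transpose, h.eq, dotProduct_comm]

lemma single_dot_mulVec (A : Matrix (Fin m) (Fin m) S) (i j : Fin m) :
    (Pi.single i (1:S)) ⬝ᵥ A *ᵥ (Pi.single j (1:S)) = A i j := by
  simp [Matrix.mulVec_single, dotProduct, Pi.single_apply, Finset.sum_ite_eq']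

lemma polarization {A B : Matrix (Fin m) (Fin m) S} (h2 : IsUnit (1 + 1 : S))
    (hA : A.IsSymm) (hB : B.IsSymm) (h : ∀ v, qV A v = qV B v) : A = B := by
  ext i j
  have e1 := h (Pi.single i 1 + Pi.single j 1)
  rw [qV_add, qV_add, h (Pi.single i 1), h (Pi.single j 1)] at e1
  have e2 : (Pi.single i (1:S)) ⬝ᵥ A *ᵥ (Pi.single j 1) + (Pi.single j (1:S)) ⬝ᵥ A *ᵥ (Pi.single i 1)
      = (Pi.single i (1:S)) ⬝ᵥ B *ᵥ (Pi.single j 1) + (Pi.single j (1:S)) ⬝ᵥ B *ᵥ (Pi.single i 1) := by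
    linear_combination e1
  rw [dot_symm hA, dot_symm hB] at e2
  simp only [single_dot_mulVec] at e2
  have h3 : (1 + 1 : S) * A j i = (1 + 1 : S) * B j i := by linear_combination e2
  have h4 := h2.mul_left_cancel h3
  rw [← hA.apply, ← hB.apply] at h4
  exact h4

lemma isSymm_map {S' : Type*} [CommRing S'] (f : S →+* S') {A : Matrix (Fin m) (Fin m) S}
    (h : A.IsSymm) : (A.map f).IsSymm := by
  unfold Matrix.IsSymm
  rw [← Matrix.transpose_map, h.eq]

/-- mapping a congruence-type matrix identity along a ring hom -/
lemma EQ_map {S' : Type*} [CommRing S'] (θ : S →+* S') {N P : Matrix (Fin m) (Fin m) S} {c : S}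
    (h : Nᵀ * P * N = c • P) :
    (N.map θ)ᵀ * (P.map θ) * (N.map θ) = θ c • (P.map θ) := by
  rw [← Matrix.transpose_map, ← Matrix.map_mul, ← Matrix.map_mul, h]
  ext i j
  simp [Matrix.map_apply, smul_eq_mul, _root_.map_mul]

lemma qV_of_EQ {N P : Matrix (Fin m) (Fin m) S} {c : S} (h : Nᵀ * P * N = c • P)
    (Y : Fin m → S) : qV P (N *ᵥ Y) = c * qV P Y := by
  rw [qV_mulVec, h, qV_smulMat]

section field
variable {E : Type*} [Field E]

lemma eval0_qV (A : Matrix (Fin m) (Fin m) E) (f : Fin m → Polynomial E) :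
    (qV (A.map (C : E →+* Polynomial E)) f).eval 0 = qV A (fun i => (f i).eval 0) := by
  have h := qV_map (evalRingHom 0) (A.map (C : E →+* Polynomial E)) f
  simp only [Matrix.map_map] at h
  have h2 : A.map ((evalRingHom 0 : Polynomial E →+* E) ∘ (C : E →+* Polynomial E) : E → E) = A := by
    ext i j; simp [Matrix.map]
  rw [h2] at h
  simpa using h

lemma spec_poly (A : Matrix (Fin m) (Fin m) E)
    (h : ∀ z : Fin m → E, qV A z = 0 → z = 0) :
    ∀ (n : ℕ) (g : Polynomial E) (f : Fin m → Polynomial E) (p : Polynomial E),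
      g ≠ 0 → g.natDegree ≤ n →
      qV (A.map (C : E →+* Polynomial E)) f = g ^ 2 * p →
      ∃ z : Fin m → E, qV A z = p.eval 0 := by
  intro n
  induction n with
  | zero =>
    intro g f p hg hdeg hid
    have hg0 : g.eval 0 ≠ 0 := by
      rw [← coeff_zero_eq_eval_zero]
      intro hc
      exact hg (by
        rw [eq_C_of_natDegree_eq_zero (Nat.le_zero.mp hdeg), hc, map_zero])
    refine ⟨(g.eval 0)⁻¹ • fun i => (f i).eval 0, ?_⟩
    rw [qV_smul]
    have h0 := congrArg (Polynomial.eval 0) hid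
    rw [eval0_qV] at h0
    rw [h0]
    simp only [eval_mul, eval_pow]
    field_simp
  | succ n ih =>
    intro g f p hg hdeg hid
    by_cases hg0 : g.eval 0 = 0
    · have hgX : g = X * g.divX := by
        conv_lhs => rw [← X_mul_divX_add g]
        rw [coeff_zero_eq_eval_zero, hg0, map_zero, add_zero]
      have hg1 : g.divX ≠ 0 := fun h0 => hg (by rw [hgX, h0, mul_zero])
      have hf0 : (fun i => (f i).eval 0) = (0 : Fin m → E) := by
        apply h
        have h0 := congrArg (Polynomial.eval 0) hid
        rw [eval0_qV] at h0
        rw [h0]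
        simp [hg0]
      have hfX : ∀ i, f i = X * (f i).divX := by
        intro i
        conv_lhs => rw [← X_mul_divX_add (f i)]
        have h0i : (f i).eval 0 = 0 := congrFun hf0 i
        rw [coeff_zero_eq_eval_zero, h0i, map_zero, add_zero]
      have hid' : qV (A.map (C : E →+* Polynomial E)) (fun i => (f i).divX)
          = g.divX ^ 2 * p := by
        have hsm : f = (X : Polynomial E) • fun i => (f i).divX := by
          funext i; simpa [Pi.smul_apply, smul_eq_mul] using hfX i
        have h0 := hid
        rw [hsm, qV_smul, hgX, mul_pow, mul_assoc] at h0
        exact mul_left_cancel₀ (pow_ne_zero 2 X_ne_zero) h0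
      refine ih g.divX (fun i => (f i).divX) p hg1 ?_ hid'
      have := natDegree_divX_eq_natDegree_tsub_one (p := g)
      omega
    · refine ⟨(g.eval 0)⁻¹ • fun i => (f i).eval 0, ?_⟩
      rw [qV_smul]
      have h0 := congrArg (Polynomial.eval 0) hid
      rw [eval0_qV] at h0
      rw [h0]
      simp only [eval_mul, eval_pow]
      field_simp

lemma aniso_poly (A : Matrix (Fin m) (Fin m) E)
    (h : ∀ z : Fin m → E, qV A z = 0 → z = 0) :
    ∀ (n : ℕ) (f : Fin m → Polynomial E), (∀ i, (f i).natDegree ≤ n) →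
      qV (A.map (C : E →+* Polynomial E)) f = 0 → f = 0 := by
  intro n
  induction n with
  | zero =>
    intro f hdeg hid
    have hf0 : (fun i => (f i).eval 0) = (0 : Fin m → E) := by
      apply h
      have h0 := congrArg (Polynomial.eval 0) hid
      rw [eval0_qV] at h0
      simpa using h0
    funext i
    have h0i : (f i).eval 0 = 0 := congrFun hf0 i
    rw [eq_C_of_natDegree_eq_zero (Nat.le_zero.mp (hdeg i)), coeff_zero_eq_eval_zero, h0i]
    simp
  | succ n ih =>
    intro f hdeg hid
    have hf0 : (fun i => (f i).eval 0) = (0 : Fin m → E) := by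
      apply h
      have h0 := congrArg (Polynomial.eval 0) hid
      rw [eval0_qV] at h0
      simpa using h0
    have hfX : ∀ i, f i = X * (f i).divX := by
      intro i
      conv_lhs => rw [← X_mul_divX_add (f i)]
      have h0i : (f i).eval 0 = 0 := congrFun hf0 i
      rw [coeff_zero_eq_eval_zero, h0i, map_zero, add_zero]
    have hsm : f = (X : Polynomial E) • fun i => (f i).divX := by
      funext i; simpa [Pi.smul_apply, smul_eq_mul] using hfX i
    have hid' : qV (A.map (C : E →+* Polynomial E)) (fun i => (f i).divX) = 0 := by
      rw [hsm, qV_smul] at hid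
      rcases mul_eq_zero.mp hid with h1 | h1
      · exact absurd h1 (pow_ne_zero 2 X_ne_zero)
      · exact h1
    have hdiv0 : (fun i => (f i).divX) = (0 : Fin m → Polynomial E) := by
      apply ih _ (fun i => ?_) hid'
      have := natDegree_divX_eq_natDegree_tsub_one (p := f i)
      have := hdeg i
      omega
    funext i
    rw [hfX i, congrFun hdiv0 i]
    simp

lemma common_denom {ι : Type*} [Fintype ι] (w : ι → RatFunc E) :
    ∃ (g : Polynomial E) (f : ι → Polynomial E), g ≠ 0 ∧
      ∀ i, algebraMap (Polynomial E) (RatFunc E) g * w i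
            = algebraMap (Polynomial E) (RatFunc E) (f i) := by
  obtain ⟨b, hb⟩ := IsLocalization.exist_integer_multiples_of_finite
    (nonZeroDivisors (Polynomial E)) w
  have hb' : ∀ i, ∃ q : Polynomial E, algebraMap (Polynomial E) (RatFunc E) q
      = (b : Polynomial E) • w i := fun i => hb i
  choose f hf using hb'
  exact ⟨b, f, mem_nonZeroDivisors_iff_ne_zero.mp b.2, fun i => by
    rw [hf i, Algebra.smul_def]⟩

/-- anisotropy is preserved by the rational function field extension -/
lemma aniso_ratfunc (A : Matrix (Fin m) (Fin m) E)
    (h : ∀ z : Fin m → E, qV A z = 0 → z = 0) :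
    ∀ w : Fin m → RatFunc E,
      qV (A.map (((algebraMap (Polynomial E) (RatFunc E)).comp
          (C : E →+* Polynomial E)) : E → RatFunc E)) w = 0
      → w = 0 := by
  intro w hw
  obtain ⟨g, f, hg, hgf⟩ := common_denom w
  set ι := algebraMap (Polynomial E) (RatFunc E) with hι
  have hgL : ι g ≠ 0 := fun h0 => hg (IsFractionRing.injective (Polynomial E) (RatFunc E)
    (by rw [h0, map_zero]))
  have key : qV (A.map ((ι.comp (C : E →+* Polynomial E)) : E → RatFunc E))
      (fun i => ι (f i)) = 0 := by
    have h' : (fun i => ι (f i)) = fun i => ι g * w i := by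
      funext i; rw [hgf i]
    rw [h', qV_mulc, hw, mul_zero]
  have key2 : qV (A.map (C : E →+* Polynomial E)) f = 0 := by
    apply IsFractionRing.injective (Polynomial E) (RatFunc E)
    rw [map_zero, qV_map ι, Matrix.map_map]
    exact key
  have hf0 : f = 0 := aniso_poly A h (Finset.univ.sup fun i => (f i).natDegree) f
    (fun i => Finset.le_sup (f := fun i => (f i).natDegree) (Finset.mem_univ i)) key2
  funext i
  have hgfi := hgf i
  rw [congrFun hf0 i] at hgfi
  simp only [Pi.zero_apply, map_zero] at hgfi
  rcases mul_eq_zero.mp hgfi with h1 | h1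
  · exact absurd h1 hgL
  · exact h1

/-- valuation-theoretic specialization at t = 0 -/
lemma spec (A : Matrix (Fin m) (Fin m) E)
    (h : ∀ z : Fin m → E, qV A z = 0 → z = 0)
    (p : Polynomial E) (w : Fin m → RatFunc E)
    (hw : qV (A.map (((algebraMap (Polynomial E) (RatFunc E)).comp
          (C : E →+* Polynomial E)) : E → RatFunc E)) w
        = algebraMap (Polynomial E) (RatFunc E) p) :
    ∃ z : Fin m → E, qV A z = p.eval 0 := by
  obtain ⟨g, f, hg, hgf⟩ := common_denom w
  set ι := algebraMap (Polynomial E) (RatFunc E) with hι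
  have key : qV (A.map ((ι.comp (C : E →+* Polynomial E)) : E → RatFunc E))
      (fun i => ι (f i)) = ι (g ^ 2 * p) := by
    have h' : (fun i => ι (f i)) = fun i => ι g * w i := by
      funext i; rw [hgf i]
    rw [h', qV_mulc, hw, _root_.map_mul, map_pow]
  have key2 : qV (A.map (C : E →+* Polynomial E)) f = g ^ 2 * p := by
    apply IsFractionRing.injective (Polynomial E) (RatFunc E)
    rw [qV_map ι, Matrix.map_map]
    exact key
  exact spec_poly A h g.natDegree g f p hg le_rfl key2

/-- a nondegenerate isotropic form over a field of char ≠ 2 is universal -/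
lemma universal (A : Matrix (Fin m) (Fin m) E) (h2 : (1 + 1 : E) ≠ 0) (hA : A.IsSymm)
    (hd : A.det ≠ 0) (w₀ : Fin m → E) (hw₀ : w₀ ≠ 0) (h0 : qV A w₀ = 0) (c : E) :
    ∃ z, qV A z = c := by
  have hAv : A *ᵥ w₀ ≠ 0 := by
    intro hv
    apply hw₀
    have : Invertible A := A.invertibleOfIsUnitDet (Ne.isUnit hd)
    calc w₀ = (⅟A * A) *ᵥ w₀ := by rw [invOf_mul_self, Matrix.one_mulVec]
    _ = ⅟A *ᵥ (A *ᵥ w₀) := by rw [Matrix.mulVec_mulVec]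
    _ = 0 := by rw [hv, Matrix.mulVec_zero]
  obtain ⟨j, hj⟩ : ∃ j, (A *ᵥ w₀) j ≠ 0 := by
    by_contra hc
    push_neg at hc
    exact hAv (funext hc)
  set y : Fin m → E := Pi.single j 1 with hy
  have hyA : y ⬝ᵥ A *ᵥ w₀ = (A *ᵥ w₀) j := by
    simp [hy, dotProduct, Pi.single_apply]
  set β := (A *ᵥ w₀) j with hβ
  set α := (c - qV A y) / ((1 + 1) * β) with hα
  refine ⟨α • w₀ + y, ?_⟩
  rw [qV_add, qV_smul, h0, mul_zero, zero_add]
  have hcross : (α • w₀) ⬝ᵥ A *ᵥ y = α * β := by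
    rw [smul_dotProduct, smul_eq_mul, dot_symm hA, hyA]
  have hcross2 : y ⬝ᵥ A *ᵥ (α • w₀) = α * β := by
    rw [Matrix.mulVec_smul, dotProduct_smul, smul_eq_mul, hyA]
  rw [hcross, hcross2, hα]
  field_simp
  ring

end field

section extract
variable {F : Type*} [Field F]

set_option maxHeartbeats 1000000 in
lemma extract (h2 : (1 : F) + 1 ≠ 0) (M : Matrix (Fin m) (Fin m) F) (hsymm : M.IsSymm)
    (hT : ∃ T : (Fin m → FractionRing (MvPolynomial (Fin m) F)) →ₗ[FractionRing (MvPolynomial (Fin m) F)]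
            (Fin m → FractionRing (MvPolynomial (Fin m) F)),
      ∀ Y : Fin m → FractionRing (MvPolynomial (Fin m) F),
        qV (M.map (algebraMap F (FractionRing (MvPolynomial (Fin m) F)))) (T Y) =
          qV (M.map (algebraMap F (FractionRing (MvPolynomial (Fin m) F))))
              (fun i => algebraMap (MvPolynomial (Fin m) F)
                (FractionRing (MvPolynomial (Fin m) F)) (MvPolynomial.X i)) *
            qV (M.map (algebraMap F (FractionRing (MvPolynomial (Fin m) F)))) Y) :
    ∃ (d : MvPolynomial (Fin m) F) (N : Matrix (Fin m) (Fin m) (MvPolynomial (Fin m) F)),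
      d ≠ 0 ∧
      Nᵀ * (M.map (algebraMap F (MvPolynomial (Fin m) F))) * N
        = (d ^ 2 * qV (M.map (algebraMap F (MvPolynomial (Fin m) F))) MvPolynomial.X)
            • (M.map (algebraMap F (MvPolynomial (Fin m) F))) := by
  classical
  set R := MvPolynomial (Fin m) F
  set K := FractionRing R
  set ι := algebraMap R K with hι
  set MK := M.map (algebraMap F K) with hMK
  set MR := M.map (algebraMap F R) with hMR
  obtain ⟨T, hTf⟩ := hT
  set A := LinearMap.toMatrix' T with hA
  have hTA : ∀ Y : Fin m → K, T Y = A *ᵥ Y := by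
    intro Y; rw [hA, ← Matrix.toLin'_apply, Matrix.toLin'_toMatrix']
  set qR : R := qV MR MvPolynomial.X with hqR
  have hMKR : MR.map ι = MK := by
    rw [hMR, hMK, Matrix.map_map, IsScalarTower.algebraMap_eq F R K, RingHom.coe_comp]
  have hqK : qV MK (fun i => ι (MvPolynomial.X i)) = ι qR := by
    rw [hqR, qV_map ι MR, hMKR]
  have h2K : IsUnit ((1:K) + 1) := by
    refine Ne.isUnit ?_
    intro hc
    apply h2
    apply (algebraMap F K).injective
    simp only [map_add, _root_.map_one, _root_.map_zero]
    exact hc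
  have hMKsymm : MK.IsSymm := isSymm_map _ hsymm
  have EQK : Aᵀ * MK * A = qV MK (fun i => ι (MvPolynomial.X i)) • MK := by
    apply polarization h2K
    · unfold Matrix.IsSymm
      rw [Matrix.transpose_mul, Matrix.transpose_mul, Matrix.transpose_transpose,
        hMKsymm.eq, Matrix.mul_assoc]
    · exact hMKsymm.smul _
    · intro Y
      rw [← qV_mulVec, ← hTA, qV_smulMat, hTf Y]
  obtain ⟨b, hb⟩ := IsLocalization.exist_integer_multiples_of_finite
    (nonZeroDivisors R) (fun p : Fin m × Fin m => A p.1 p.2)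
  have hb' : ∀ p : Fin m × Fin m, ∃ r : R, ι r = (b : R) • A p.1 p.2 := fun p => hb p
  choose Nf hNf using hb'
  set d : R := (b : R) with hd
  set N : Matrix (Fin m) (Fin m) R := Matrix.of (fun i j => Nf (i, j)) with hN
  have hNA : N.map ι = ι d • A := by
    ext i j
    rw [Matrix.map_apply, hN, Matrix.of_apply, hNf (i, j), Algebra.smul_def, hd,
      Matrix.smul_apply, smul_eq_mul]
  refine ⟨d, N, mem_nonZeroDivisors_iff_ne_zero.mp b.2, ?_⟩
  have hinj : Function.Injective ι := IsFractionRing.injective R K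
  have EQK2 : (Nᵀ * MR * N).map ι = ((d ^ 2 * qR) • MR).map ι := by
    have lhs : (Nᵀ * MR * N).map ι = (N.map ι)ᵀ * MK * (N.map ι) := by
      rw [Matrix.map_mul, Matrix.map_mul, Matrix.transpose_map, hMKR]
    have rhs : ((d ^ 2 * qR) • MR).map ι = (ι d ^ 2 * ι qR) • MK := by
      rw [← hMKR]
      ext i j
      simp only [Matrix.map_apply, Matrix.smul_apply, smul_eq_mul, _root_.map_mul, map_pow]
    rw [lhs, rhs, hNA]
    rw [Matrix.transpose_smul, Matrix.smul_mul, Matrix.smul_mul, Matrix.mul_smul, EQK, hqK]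
    rw [smul_smul, smul_smul]
    congr 1
    ring
  refine Matrix.ext fun i j => hinj ?_
  have h5 : (Nᵀ * MR * N).map ι i j = ((d ^ 2 * qR) • MR).map ι i j := by rw [EQK2]
  simpa [Matrix.map_apply] using h5

end extract
end StrictMultAux

open StrictMultAux in
set_option maxHeartbeats 1000000 in
/-- If a quadratic form `φ` of dimension `m` over `F` admits, over `K = F(X₁,…,Xₘ)`, a
`K`-linear map `T` with `φ(T Y) = φ(X₁,…,Xₘ)·φ(Y)`, then `φ` is strictly multiplicative:
over every field extension `E/F`, for all `u, v ∈ E^m` there is `w ∈ E^m` with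
`φ(u)·φ(v) = φ(w)`. -/
theorem stmt_9 (F : Type*) [Field F] (h2 : (1 : F) + 1 ≠ 0)
    (m : ℕ) (M : Matrix (Fin m) (Fin m) F) (hsymm : M.IsSymm) (hnd : M.det ≠ 0)
    (hT : ∃ T : (Fin m → FractionRing (MvPolynomial (Fin m) F)) →ₗ[FractionRing (MvPolynomial (Fin m) F)]
            (Fin m → FractionRing (MvPolynomial (Fin m) F)),
      ∀ Y : Fin m → FractionRing (MvPolynomial (Fin m) F),
        formVal (algebraMap F (FractionRing (MvPolynomial (Fin m) F))) M (T Y) =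
          formVal (algebraMap F (FractionRing (MvPolynomial (Fin m) F))) M
              (fun i => algebraMap (MvPolynomial (Fin m) F)
                (FractionRing (MvPolynomial (Fin m) F)) (MvPolynomial.X i)) *
            formVal (algebraMap F (FractionRing (MvPolynomial (Fin m) F))) M Y) :
    ∀ (E : Type*) [Field E] [Algebra F E] (u v : Fin m → E),
      ∃ w : Fin m → E,
        formVal (algebraMap F E) M u * formVal (algebraMap F E) M v =
          formVal (algebraMap F E) M w := by
  classical
  obtain ⟨d, N, hd, EQR⟩ := extract h2 M hsymm hT
  intro E _ _ u v
  simp only [formVal_eq]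
  set φ : F →+* E := algebraMap F E with hφ
  set AE := M.map (φ : F → E) with hAE
  have hφinj : Function.Injective φ := φ.injective
  have h2E : (1 + 1 : E) ≠ 0 := by
    intro hc; apply h2; apply hφinj
    simp only [map_add, _root_.map_one, _root_.map_zero]; exact hc
  set qRR : MvPolynomial (Fin m) F :=
    qV (M.map (algebraMap F (MvPolynomial (Fin m) F))) MvPolynomial.X with hqRR
  by_cases hiso : ∀ z : Fin m → E, qV AE z = 0 → z = 0
  · -- anisotropic case
    set E' := RatFunc E with hE'
    set jE : E →+* E' := (algebraMap (Polynomial E) (RatFunc E)).comp Polynomial.C with hjE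
    set φ' : F →+* E' := jE.comp φ with hφ'
    set u' : Fin m → E' := fun i => jE (u i) with hu'
    set v' : Fin m → E' := fun i => jE (v i) with hv'
    have hAE' : AE.map (jE : E → E') = M.map (φ' : F → E') := by
      rw [hAE, Matrix.map_map]
      rfl
    have aniso' : ∀ z : Fin m → E', qV (M.map (φ' : F → E')) z = 0 → z = 0 := by
      intro z hz
      refine aniso_ratfunc AE hiso z ?_
      rw [← hjE] at *
      rw [hAE']
      exact hz
    haveI : Infinite E' :=
      Infinite.of_injective _ (IsFractionRing.injective (Polynomial E) (RatFunc E))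
    set σ : MvPolynomial (Fin m) F →+* MvPolynomial (Fin m) E' :=
      MvPolynomial.eval₂Hom ((MvPolynomial.C : E' →+* MvPolynomial (Fin m) E').comp φ')
        (fun i => MvPolynomial.X i + MvPolynomial.C (u' i)) with hσ
    have hσfact : ∀ q, σ q = MvPolynomial.bind₁
        (fun i => MvPolynomial.X i + MvPolynomial.C (u' i))
        (MvPolynomial.map (φ' : F →+* E') q) := by
      intro q
      have hh : σ = ((MvPolynomial.bind₁
          (fun i => MvPolynomial.X i + MvPolynomial.C (u' i)) :
            MvPolynomial (Fin m) E' →ₐ[E'] MvPolynomial (Fin m) E').toRingHom).comp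
          (MvPolynomial.map (φ' : F →+* E')) := by
        apply MvPolynomial.ringHom_ext
        · intro a; simp [hσ]
        · intro i; simp [hσ]
      rw [hh]; rfl
    have hσinj : Function.Injective σ := by
      intro x y hxy
      have hmapinj : Function.Injective
          ((MvPolynomial.map (φ' : F →+* E')) :
            MvPolynomial (Fin m) F →+* MvPolynomial (Fin m) E') :=
        MvPolynomial.map_injective _ φ'.injective
      have hli : Function.LeftInverse
          (MvPolynomial.bind₁ (fun i => MvPolynomial.X i - MvPolynomial.C (u' i)))
          (MvPolynomial.bind₁ (fun i => MvPolynomial.X i + MvPolynomial.C (u' i)) :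
            MvPolynomial (Fin m) E' → MvPolynomial (Fin m) E') := by
        intro r
        rw [MvPolynomial.bind₁_bind₁]
        simp
      apply hmapinj
      apply hli.injective
      rw [← hσfact, ← hσfact, hxy]
    have hσd : σ d ≠ 0 := fun hc => hd (hσinj (by rw [hc, _root_.map_zero]))
    obtain ⟨e, he⟩ : ∃ e : Fin m → E', MvPolynomial.eval e (σ d) ≠ 0 := by
      by_contra hc
      push_neg at hc
      exact hσd (MvPolynomial.funext fun x => by rw [hc x, _root_.map_zero])
    set θ : MvPolynomial (Fin m) F →+* Polynomial E' :=
      MvPolynomial.eval₂Hom ((Polynomial.C : E' →+* Polynomial E').comp φ')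
        (fun i => Polynomial.C (u' i) + Polynomial.X * Polynomial.C (e i)) with hθ
    have hθd : θ d ≠ 0 := by
      intro hc
      apply he
      have heval : (Polynomial.evalRingHom 1).comp θ
          = MvPolynomial.eval₂Hom (φ' : F →+* E') (fun i => u' i + e i) := by
        apply MvPolynomial.ringHom_ext
        · intro a; simp [hθ]
        · intro i; simp [hθ]
      have heval2 : (MvPolynomial.eval e).comp σ
          = MvPolynomial.eval₂Hom (φ' : F →+* E') (fun i => u' i + e i) := by
        apply MvPolynomial.ringHom_ext
        · intro a; simp [hσ]
        · intro i; simp [hσ, add_comm]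
      have h1 : MvPolynomial.eval e (σ d) = (θ d).eval 1 := by
        have e1 : MvPolynomial.eval e (σ d) = ((MvPolynomial.eval e).comp σ) d := rfl
        have e2 : (θ d).eval 1 = ((Polynomial.evalRingHom 1).comp θ) d := rfl
        rw [e1, e2, heval, heval2]
      rw [h1, hc]
      simp
    have hMRθ : (M.map ((algebraMap F (MvPolynomial (Fin m) F)) : F → MvPolynomial (Fin m) F)).map
          (θ : MvPolynomial (Fin m) F → Polynomial E')
        = M.map (((Polynomial.C : E' →+* Polynomial E').comp φ' : F →+* Polynomial E') :
            F → Polynomial E') := by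
      rw [Matrix.map_map]
      have hfun : ((θ : MvPolynomial (Fin m) F → Polynomial E') ∘
          ((algebraMap F (MvPolynomial (Fin m) F)) : F → MvPolynomial (Fin m) F))
          = (((Polynomial.C : E' →+* Polynomial E').comp φ') : F → Polynomial E') := by
        funext a
        simp [MvPolynomial.algebraMap_eq, hθ]
      rw [hfun]
    have EQP := EQ_map θ EQR
    rw [hMRθ] at EQP
    set P := M.map (((Polynomial.C : E' →+* Polynomial E').comp φ' : F →+* Polynomial E') :
      F → Polynomial E') with hP
    set Y : Fin m → Polynomial E' := fun i => Polynomial.C (v' i) with hY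
    have hval : qV P ((N.map (θ : MvPolynomial (Fin m) F → Polynomial E')) *ᵥ Y)
        = θ (d ^ 2 * qRR) * qV P Y := qV_of_EQ EQP Y
    have hqVY : qV P Y = Polynomial.C (qV (M.map (φ' : F → E')) v') := by
      have hh := qV_map (Polynomial.C : E' →+* Polynomial E') (M.map (φ' : F → E')) v'
      rw [Matrix.map_map, ← RingHom.coe_comp] at hh
      rw [hP, hY, ← hh]
    set L' := RatFunc E' with hL'
    set ι' := algebraMap (Polynomial E') L' with hι'
    have hι'inj : Function.Injective ι' := IsFractionRing.injective (Polynomial E') L'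
    have hθdL : ι' (θ d) ≠ 0 := fun hc0 => hθd (hι'inj (by rw [hc0, _root_.map_zero]))
    set W : Fin m → L' := fun k =>
      (ι' (θ d))⁻¹ * ι' (((N.map (θ : MvPolynomial (Fin m) F → Polynomial E')) *ᵥ Y) k) with hW
    set p : Polynomial E' := θ qRR * Polynomial.C (qV (M.map (φ' : F → E')) v') with hp
    have hWval : qV ((M.map (φ' : F → E')).map
          ((((algebraMap (Polynomial E') (RatFunc E')).comp
            (Polynomial.C : E' →+* Polynomial E'))) : E' → RatFunc E')) W
        = algebraMap (Polynomial E') (RatFunc E') p := by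
      have hgram : (M.map (φ' : F → E')).map
          ((((algebraMap (Polynomial E') (RatFunc E')).comp
            (Polynomial.C : E' →+* Polynomial E'))) : E' → RatFunc E')
          = P.map (ι' : Polynomial E' → L') := by
        rw [hP, Matrix.map_map, Matrix.map_map]
        congr 1
      rw [hgram, hW, qV_mulc]
      have hmap := qV_map ι' P ((N.map (θ : MvPolynomial (Fin m) F → Polynomial E')) *ᵥ Y)
      rw [← hmap, hval, hqVY, hp]
      simp only [_root_.map_mul, map_pow]
      field_simp
      rfl
    obtain ⟨z, hz⟩ := spec (M.map (φ' : F → E')) aniso' p W hWval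
    have hq0 : (θ qRR).eval 0 = qV (M.map (φ' : F → E')) u' := by
      have hcomp : (Polynomial.evalRingHom 0).comp θ
          = MvPolynomial.eval₂Hom (φ' : F →+* E') u' := by
        apply MvPolynomial.ringHom_ext
        · intro a; simp [hθ]
        · intro i; simp [hθ]
      have e2 : (θ qRR).eval 0 = ((Polynomial.evalRingHom 0).comp θ) qRR := rfl
      rw [e2, hcomp, hqRR]
      have hh := qV_map (MvPolynomial.eval₂Hom (φ' : F →+* E') u')
        (M.map ((algebraMap F (MvPolynomial (Fin m) F)) : F → MvPolynomial (Fin m) F))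
        MvPolynomial.X
      rw [hh, Matrix.map_map]
      have hfun3 : (((MvPolynomial.eval₂Hom (φ' : F →+* E') u') :
            MvPolynomial (Fin m) F → E') ∘
          ((algebraMap F (MvPolynomial (Fin m) F)) : F → MvPolynomial (Fin m) F))
          = (φ' : F → E') := by
        funext a
        simp [MvPolynomial.algebraMap_eq]
      rw [hfun3]
      congr 1
      funext i
      simp
    have h1u : qV (M.map (φ' : F → E')) u' = jE (qV AE u) := by
      rw [← hAE', qV_map jE AE u, hu']
    have h1v : qV (M.map (φ' : F → E')) v' = jE (qV AE v) := by
      rw [← hAE', qV_map jE AE v, hv']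
    have hpz : p.eval 0 = jE (qV AE u * qV AE v) := by
      rw [hp, Polynomial.eval_mul, Polynomial.eval_C, hq0, h1u, h1v, _root_.map_mul]
    have hz2 : qV (AE.map ((((algebraMap (Polynomial E) (RatFunc E)).comp
          (Polynomial.C : E →+* Polynomial E))) : E → RatFunc E)) z
        = algebraMap (Polynomial E) (RatFunc E)
            (Polynomial.C (qV AE u * qV AE v)) := by
      rw [← hjE, hAE', hz, hpz]
      rw [hjE]
      rfl
    obtain ⟨w, hw⟩ := spec AE hiso (Polynomial.C (qV AE u * qV AE v)) z hz2
    rw [Polynomial.eval_C] at hw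
    exact ⟨w, hw.symm⟩
  · -- isotropic case: the form is universal
    push_neg at hiso
    obtain ⟨z, hz0, hzne⟩ := hiso
    have hdet : AE.det ≠ 0 := by
      have hMd : φ M.det = AE.det := by
        rw [RingHom.map_det]; rfl
      intro hc
      exact hnd (hφinj (by rw [hMd, hc, _root_.map_zero]))
    obtain ⟨w, hw⟩ := universal AE h2E (isSymm_map _ hsymm) hdet z hzne hz0
      (qV AE u * qV AE v)
    exact ⟨w, hw.symm⟩
end

section
/- Let F be a field of characteristic not 2 and φ = ⟨1,a₁⟩⊗⋯⊗⟨1,aₙ⟩ an anisotropic n-fold Pfister form over F. For every field extension E/F, the set of nonzero values D_E(φ) = {φ(v) : v ∈ E^{2ⁿ}, φ(v) ≠ 0} is a subgroup of E^×. -/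
/-- `pfisterVal a i v` is the value of the `i`-fold Pfister form
`⟨1, a 1⟩⊗⋯⊗⟨1, a i⟩` at the vector `(v 0, …, v (2^i − 1))`. -/
def pfisterVal {K : Type*} [Field K] (a : ℕ → K) : ℕ → (ℕ → K) → K
  | 0, v => v 0 ^ 2
  | (i + 1), v => pfisterVal a i v + a (i + 1) * pfisterVal a i (fun j => v (2 ^ i + j))

section
variable {K : Type*} [Field K] (a : ℕ → K)

lemma pv_depend : ∀ n (v w : ℕ → K), (∀ j, j < 2 ^ n → v j = w j) →
    pfisterVal a n v = pfisterVal a n w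
  | 0, v, w, h => by simp only [pfisterVal, h 0 (by norm_num)]
  | (n+1), v, w, h => by
    have hpow : (2:ℕ) ^ (n+1) = 2 ^ n + 2 ^ n := by rw [pow_succ]; ring
    simp only [pfisterVal]
    rw [pv_depend n v w (fun j hj => h j (by omega)),
      pv_depend n (fun j => v (2 ^ n + j)) (fun j => w (2 ^ n + j))
        (fun j hj => h _ (by omega))]

lemma pv_smul : ∀ n (c : K) (v : ℕ → K),
    pfisterVal a n (fun j => c * v j) = c ^ 2 * pfisterVal a n v
  | 0, c, v => by simp only [pfisterVal]; ring
  | (n+1), c, v => by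
    simp only [pfisterVal, pv_smul n c]; ring

lemma pv_key : ∀ n (e : K) (x y : ℕ → K),
    pfisterVal a n (fun j => x j - e * y j) + e * pfisterVal a n (fun j => x j + y j)
      = (1 + e) * (pfisterVal a n x + e * pfisterVal a n y)
  | 0, e, x, y => by simp only [pfisterVal]; ring
  | (n+1), e, x, y => by
    simp only [pfisterVal]
    linear_combination pv_key n e x y +
      a (n+1) * pv_key n e (fun j => x (2 ^ n + j)) (fun j => y (2 ^ n + j))

/-- gluing two vectors -/
def pvGlue (n : ℕ) (p q : ℕ → K) : ℕ → K :=
  fun j => if j < 2 ^ n then p j else q (j - 2 ^ n)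

lemma pv_glue (n : ℕ) (p q : ℕ → K) :
    pfisterVal a (n+1) (pvGlue n p q) =
      pfisterVal a n p + a (n+1) * pfisterVal a n q := by
  simp only [pfisterVal]
  have h1 : pfisterVal a n (pvGlue n p q) = pfisterVal a n p :=
    pv_depend a n _ _ (fun j hj => by simp [pvGlue, hj])
  have h2 : (fun j => pvGlue n p q (2 ^ n + j)) = q := by
    funext j
    simp only [pvGlue]
    rw [if_neg (by omega)]
    congr 1
    omega
  rw [h1, h2]

lemma pv_lift (n : ℕ) (t : K)
    (h : ∃ T : (ℕ → K) → (ℕ → K), ∀ v, pfisterVal a n (T v) = t * pfisterVal a n v) :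
    ∃ T : (ℕ → K) → (ℕ → K), ∀ v, pfisterVal a (n+1) (T v) = t * pfisterVal a (n+1) v := by
  obtain ⟨T, hT⟩ := h
  refine ⟨fun v => pvGlue n (T v) (T (fun j => v (2 ^ n + j))), fun v => ?_⟩
  rw [pv_glue, hT, hT]
  simp only [pfisterVal]; ring

lemma pv_sim_a (n : ℕ) :
    ∃ T : (ℕ → K) → (ℕ → K), ∀ v,
      pfisterVal a (n+1) (T v) = a (n+1) * pfisterVal a (n+1) v := by
  refine ⟨fun v => pvGlue n (fun j => a (n+1) * v (2 ^ n + j)) v, fun v => ?_⟩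
  rw [pv_glue, pv_smul]
  simp only [pfisterVal]; ring

lemma pv_sim : ∀ n (b : K), (∃ v, pfisterVal a n v = b) → b ≠ 0 →
    ∃ T : (ℕ → K) → (ℕ → K), ∀ v, pfisterVal a n (T v) = b * pfisterVal a n v
  | 0, b, ⟨v₀, hv₀⟩, hb =>
    ⟨fun v j => v₀ 0 * v j, fun v => by simp only [pfisterVal] at hv₀ ⊢; rw [← hv₀]; ring⟩
  | (n+1), b, ⟨v₀, hv₀⟩, hb => by
    set x := pfisterVal a n v₀ with hx
    set y := pfisterVal a n (fun j => v₀ (2 ^ n + j)) with hy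
    have hb' : b = x + a (n+1) * y := by rw [← hv₀]; simp only [pfisterVal]; rfl
    by_cases hy0 : y = 0
    · -- b = x
      have hx0 : x ≠ 0 := by rw [hb', hy0] at hb; simpa using hb
      obtain ⟨T, hT⟩ := pv_lift a n x (pv_sim n x ⟨v₀, rfl⟩ hx0)
      exact ⟨T, fun v => by rw [hT, hb', hy0]; ring⟩
    · by_cases hx0 : x = 0
      · -- b = a(n+1) * y
        obtain ⟨Ty, hTy⟩ := pv_lift a n y (pv_sim n y ⟨_, rfl⟩ hy0)
        obtain ⟨Ta, hTa⟩ := pv_sim_a a n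
        refine ⟨fun v => Ty (Ta v), fun v => ?_⟩
        rw [hTy, hTa, hb', hx0]; ring
      · -- x ≠ 0, y ≠ 0
        obtain ⟨Tx, hTx⟩ := pv_sim n x ⟨v₀, rfl⟩ hx0
        obtain ⟨Ty, hTy⟩ := pv_sim n y ⟨_, rfl⟩ hy0
        set d : K := y * x⁻¹ with hd
        have hd0 : d ≠ 0 := by
          simp only [hd]
          exact mul_ne_zero hy0 (inv_ne_zero hx0)
        -- similarity of factor d on level n
        have hTd : ∀ v, pfisterVal a n (fun j => x⁻¹ * Tx (Ty v) j)
            = d * pfisterVal a n v := by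
          intro v
          rw [pv_smul, hTx, hTy, hd]
          field_simp
          try ring
        set e : K := a (n+1) * d with he
        set c : K := 1 + e with hc
        have hbc : b = x * c := by
          rw [hb', hc, he, hd]
          field_simp
          try ring
        -- similarity of factor c on level n+1
        have hS : ∃ S : (ℕ → K) → (ℕ → K), ∀ v,
            pfisterVal a (n+1) (S v) = c * pfisterVal a (n+1) v := by
          refine ⟨fun v =>
            let w' : ℕ → K := fun j => d⁻¹ * (x⁻¹ * Tx (Ty (fun i => v (2 ^ n + i))) j)
            pvGlue n (fun j => v j - e * w' j)
              (fun j => x⁻¹ * Tx (Ty (fun i => v i + w' i)) j), fun v => ?_⟩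
          simp only
          rw [pv_glue, hTd]
          set w : ℕ → K := fun i => v (2 ^ n + i) with hw
          set w' : ℕ → K := fun j => d⁻¹ * (x⁻¹ * Tx (Ty w) j) with hw'
          have hw'val : pfisterVal a n w' = d⁻¹ * pfisterVal a n w := by
            rw [hw', pv_smul, hTd]
            field_simp
          have hkey := pv_key a n e v w'
          have : pfisterVal a n (fun j => v j - e * w' j)
                + a (n+1) * (d * pfisterVal a n (fun i => v i + w' i))
              = c * (pfisterVal a n v + a (n+1) * pfisterVal a n w) := by
            have hed : a (n+1) * d = e := he.symm
            calc pfisterVal a n (fun j => v j - e * w' j)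
                  + a (n+1) * (d * pfisterVal a n (fun i => v i + w' i))
                = pfisterVal a n (fun j => v j - e * w' j)
                  + e * pfisterVal a n (fun i => v i + w' i) := by rw [← hed]; ring
              _ = (1 + e) * (pfisterVal a n v + e * pfisterVal a n w') := hkey
              _ = c * (pfisterVal a n v + a (n+1) * pfisterVal a n w) := by
                  rw [hc, hw'val, he]
                  field_simp
                  try ring
          rw [this]
          simp only [pfisterVal]
          rfl
        obtain ⟨S, hS⟩ := hS
        obtain ⟨TX, hTX⟩ := pv_lift a n x ⟨Tx, hTx⟩
        refine ⟨fun v => TX (S v), fun v => ?_⟩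
        rw [hTX, hS, hbc]; ring

lemma pv_zero (n : ℕ) : pfisterVal a n (fun _ => (0:K)) = 0 := by
  induction n with
  | zero => simp [pfisterVal]
  | succ n ih => simp only [pfisterVal]; rw [ih]; ring

lemma pv_one (n : ℕ) : pfisterVal a n (fun j => if j = 0 then (1:K) else 0) = 1 := by
  induction n with
  | zero => simp [pfisterVal]
  | succ n ih =>
    simp only [pfisterVal]
    have h2 : (fun j => if 2 ^ n + j = 0 then (1:K) else 0) = (fun _ => (0:K)) := by
      funext j; rw [if_neg (by positivity)]
    rw [ih, h2, pv_zero]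
    ring

end

/-- For an anisotropic `n`-fold Pfister form `φ` over `F` and any field extension `E/F`,
the set of nonzero values of `φ` over `E` is a subgroup of `Eˣ`: it contains `1` and is
closed under multiplication and inversion. -/
theorem stmt_16 (F : Type*) [Field F] (h2 : (1 : F) + 1 ≠ 0)
    (n : ℕ) (a : ℕ → F) (ha : ∀ i, 1 ≤ i → i ≤ n → a i ≠ 0)
    (haniso : ∀ v : Fin (2 ^ n) → F,
      pfisterVal a n (fun j => if h : j < 2 ^ n then v ⟨j, h⟩ else 0) = 0 → v = 0)
    (E : Type*) [Field E] [Algebra F E] :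
    let φE : (Fin (2 ^ n) → E) → E := fun v =>
      pfisterVal (fun i => algebraMap F E (a i)) n
        (fun j => if h : j < 2 ^ n then v ⟨j, h⟩ else 0)
    (∃ v, φE v = ((1 : Eˣ) : E)) ∧
    (∀ u w : Eˣ, (∃ v, φE v = (u : E)) → (∃ v, φE v = (w : E)) →
      ∃ v, φE v = ((u * w : Eˣ) : E)) ∧
    (∀ u : Eˣ, (∃ v, φE v = (u : E)) → ∃ v, φE v = ((u⁻¹ : Eˣ) : E)) := by
  intro φE
  set aE : ℕ → E := fun i => algebraMap F E (a i) with haE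
  have hpos : 0 < 2 ^ n := pow_pos (by norm_num) n
  -- any value of pfisterVal aE n is a value of φE
  have hrestrict : ∀ w : ℕ → E, φE (fun i => w i) = pfisterVal aE n w := by
    intro w
    refine pv_depend aE n _ w (fun j hj => ?_)
    simp [hj]
  refine ⟨?_, ?_, ?_⟩
  · -- 1 is a value
    refine ⟨fun i => if (i : ℕ) = 0 then 1 else 0, ?_⟩
    have : (fun j => if h : j < 2 ^ n then
        (if ((⟨j, h⟩ : Fin (2 ^ n)) : ℕ) = 0 then (1:E) else 0) else 0)
        = (fun j => if j = 0 then (1:E) else 0) := by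
      funext j
      by_cases h : j < 2 ^ n
      · simp [h]
      · rw [dif_neg h, if_neg (by omega)]
    show pfisterVal aE n _ = _
    rw [this, pv_one, Units.val_one]
  · -- closed under multiplication
    rintro u w ⟨v₁, hv₁⟩ ⟨v₂, hv₂⟩
    obtain ⟨T, hT⟩ := pv_sim aE n (u : E) ⟨_, hv₁⟩ u.ne_zero
    refine ⟨fun i => T (fun j => if h : j < 2 ^ n then v₂ ⟨j, h⟩ else 0) i, ?_⟩
    have hv₂' : pfisterVal aE n (fun j => if h : j < 2 ^ n then v₂ ⟨j, h⟩ else 0) = (w : E) := hv₂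
    rw [hrestrict, hT, hv₂', Units.val_mul]
  · -- closed under inversion
    rintro u ⟨v, hv⟩
    refine ⟨fun i => ((u⁻¹ : Eˣ) : E) * v i, ?_⟩
    have hext : (fun j => if h : j < 2 ^ n then ((u⁻¹ : Eˣ) : E) * v ⟨j, h⟩ else 0)
        = (fun j => ((u⁻¹ : Eˣ) : E) *
            (if h : j < 2 ^ n then v ⟨j, h⟩ else 0)) := by
      funext j
      by_cases h : j < 2 ^ n <;> simp [h]
    show pfisterVal aE n _ = _
    have hv' : pfisterVal aE n (fun j => if h : j < 2 ^ n then v ⟨j, h⟩ else 0) = (u : E) := hv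
    rw [hext, pv_smul, hv']
    rw [Units.val_inv_eq_inv_val]
    field_simp
end
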